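/- arXiv:2009.11464 — 3 statements merged into one kernel-verified Lean document; each statement's English description precedes it below -/
import Mathlib

section
/- Let s and t be positive semi-definite symmetric bilinear forms on a finite-dimensional real vector space W, with signatures σ(s) = (0,b,c) and σ(t) = (0,c,b), and suppose rad(s) ∩ rad(t) = 0. Then the signature of t - s is (c,0,b). -/
open Module

/-- The maximal dimension of a subspace on which the symmetric bilinear form `b`
is negative definite. -/
noncomputable def negDim {W : Type*} [AddCommGroup W] [Module ℝ W]
    (b : LinearMap.BilinForm ℝ W) : ℕ :=
  sSup {d | ∃ U : Submodule ℝ W, finrank ℝ U = d ∧ ∀ x ∈ U, x ≠ 0 → b x x < 0}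

/-- The maximal dimension of a subspace on which the symmetric bilinear form `b`
is positive definite. -/
noncomputable def posDim {W : Type*} [AddCommGroup W] [Module ℝ W]
    (b : LinearMap.BilinForm ℝ W) : ℕ :=
  sSup {d | ∃ U : Submodule ℝ W, finrank ℝ U = d ∧ ∀ x ∈ U, x ≠ 0 → 0 < b x x}

/-- The signature `(s⁻, s⁰, s⁺)` of a symmetric bilinear form: the maximal dimension of a
negative definite subspace, the dimension of the radical, and the maximal dimension of a
positive definite subspace. -/
noncomputable def signature {W : Type*} [AddCommGroup W] [Module ℝ W]
    (b : LinearMap.BilinForm ℝ W) : ℕ × ℕ × ℕ :=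
  (negDim b, finrank ℝ (LinearMap.ker b), posDim b)

section Aux

variable {W : Type*} [AddCommGroup W] [Module ℝ W] [FiniteDimensional ℝ W]

lemma posSet_bddAbove (q : LinearMap.BilinForm ℝ W) :
    BddAbove {d | ∃ U : Submodule ℝ W, finrank ℝ U = d ∧ ∀ x ∈ U, x ≠ 0 → 0 < q x x} :=
  ⟨finrank ℝ W, fun _ ⟨U, hU, _⟩ => hU ▸ U.finrank_le⟩

lemma negSet_bddAbove (q : LinearMap.BilinForm ℝ W) :
    BddAbove {d | ∃ U : Submodule ℝ W, finrank ℝ U = d ∧ ∀ x ∈ U, x ≠ 0 → q x x < 0} :=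
  ⟨finrank ℝ W, fun _ ⟨U, hU, _⟩ => hU ▸ U.finrank_le⟩

lemma le_posDim (q : LinearMap.BilinForm ℝ W) (U : Submodule ℝ W)
    (h : ∀ x ∈ U, x ≠ 0 → 0 < q x x) : finrank ℝ U ≤ posDim q :=
  le_csSup (posSet_bddAbove q) ⟨U, rfl, h⟩

lemma le_negDim (q : LinearMap.BilinForm ℝ W) (U : Submodule ℝ W)
    (h : ∀ x ∈ U, x ≠ 0 → q x x < 0) : finrank ℝ U ≤ negDim q :=
  le_csSup (negSet_bddAbove q) ⟨U, rfl, h⟩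

lemma exists_posDim (q : LinearMap.BilinForm ℝ W) :
    ∃ U : Submodule ℝ W, finrank ℝ U = posDim q ∧ ∀ x ∈ U, x ≠ 0 → 0 < q x x := by
  have h0 : 0 ∈ {d | ∃ U : Submodule ℝ W, finrank ℝ U = d ∧ ∀ x ∈ U, x ≠ 0 → 0 < q x x} :=
    ⟨⊥, finrank_bot ℝ W, fun x hx hx0 => absurd ((Submodule.mem_bot ℝ).mp hx) hx0⟩
  exact Nat.sSup_mem ⟨0, h0⟩ (posSet_bddAbove q)

lemma exists_negDim (q : LinearMap.BilinForm ℝ W) :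
    ∃ U : Submodule ℝ W, finrank ℝ U = negDim q ∧ ∀ x ∈ U, x ≠ 0 → q x x < 0 := by
  have h0 : 0 ∈ {d | ∃ U : Submodule ℝ W, finrank ℝ U = d ∧ ∀ x ∈ U, x ≠ 0 → q x x < 0} :=
    ⟨⊥, finrank_bot ℝ W, fun x hx hx0 => absurd ((Submodule.mem_bot ℝ).mp hx) hx0⟩
  exact Nat.sSup_mem ⟨0, h0⟩ (negSet_bddAbove q)

/-- For a positive semidefinite symmetric bilinear form, a vector with zero "norm"
lies in the kernel (Cauchy–Schwarz). -/
lemma mem_ker_of_psd (q : LinearMap.BilinForm ℝ W) (hsymm : q.IsSymm)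
    (hpsd : ∀ v, 0 ≤ q v v) {v : W} (hv : q v v = 0) : q v = 0 := by
  ext w
  have key : ∀ r : ℝ, 0 ≤ q w w * (r * r) + (2 * q v w) * r + 0 := by
    intro r
    have h := hpsd (v + r • w)
    have hsw : q w v = q v w := by
      have := hsymm.eq w v; simpa using this
    simp only [map_add, map_smul, LinearMap.add_apply, LinearMap.smul_apply,
      smul_eq_mul, hv, hsw] at h
    nlinarith [h]
  have hd := discrim_le_zero key
  have : q v w = 0 := by
    unfold discrim at hd
    nlinarith [hd]
  simpa using this

end Aux

/-- If `s`, `t` are positive semi-definite symmetric bilinear forms on a finite-dimensional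
real vector space `W`, with `σ(s) = (0,b,c)`, `σ(t) = (0,c,b)` and `rad(s) ⊓ rad(t) = 0`,
then `σ(t - s) = (c,0,b)`. -/
theorem signature_sub_of_semidefinite
    (W : Type*) [AddCommGroup W] [Module ℝ W] [FiniteDimensional ℝ W]
    (s t : LinearMap.BilinForm ℝ W) (b c : ℕ)
    (hs_symm : s.IsSymm) (ht_symm : t.IsSymm)
    (hs_psd : ∀ v, 0 ≤ s v v) (ht_psd : ∀ v, 0 ≤ t v v)
    (hσs : signature s = (0, b, c)) (hσt : signature t = (0, c, b))
    (hrad : LinearMap.ker s ⊓ LinearMap.ker t = ⊥) :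
    signature (t - s) = (c, 0, b) := by
  set q : LinearMap.BilinForm ℝ W := t - s with hq
  have hqapp : ∀ x y : W, q x y = t x y - s x y := by
    intro x y; simp [hq]
  have hq_symm : ∀ x y : W, q x y = q y x := by
    intro x y
    have h1 : s x y = s y x := by have := hs_symm.eq x y; simpa using this
    have h2 : t x y = t y x := by have := ht_symm.eq x y; simpa using this
    rw [hqapp, hqapp, h1, h2]
  simp only [signature, Prod.mk.injEq] at hσs hσt
  obtain ⟨-, hb, hc⟩ := hσs
  obtain ⟨-, hc', hb'⟩ := hσt
  set n := finrank ℝ W with hn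
  -- positive definite on ker s, of dimension b
  have hposb : b ≤ posDim q := by
    rw [← hb]
    apply le_posDim
    intro x hx hx0
    have hsx : s x = 0 := LinearMap.mem_ker.mp hx
    have htx : 0 ≤ t x x := ht_psd x
    rcases htx.lt_or_eq with h | h
    · rw [hqapp, hsx]; simpa using h
    · exfalso
      have : t x = 0 := mem_ker_of_psd t ht_symm ht_psd h.symm
      have : x ∈ LinearMap.ker s ⊓ LinearMap.ker t := ⟨hx, LinearMap.mem_ker.mpr this⟩
      rw [hrad] at this
      exact hx0 (by simpa using this)
  -- negative definite on ker t, of dimension c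
  have hnegc : c ≤ negDim q := by
    rw [← hc']
    apply le_negDim
    intro x hx hx0
    have htx : t x = 0 := LinearMap.mem_ker.mp hx
    have hsx : 0 ≤ s x x := hs_psd x
    rcases hsx.lt_or_eq with h | h
    · rw [hqapp]; have : t x x = 0 := by rw [htx]; simp
      rw [this]; linarith
    · exfalso
      have : s x = 0 := mem_ker_of_psd s hs_symm hs_psd h.symm
      have : x ∈ LinearMap.ker s ⊓ LinearMap.ker t := ⟨LinearMap.mem_ker.mpr this, hx⟩
      rw [hrad] at this
      exact hx0 (by simpa using this)
  -- n = b + c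
  have hnbc : n = b + c := by
    obtain ⟨U, hU⟩ := Submodule.exists_isCompl (LinearMap.ker s)
    have hUpos : ∀ x ∈ U, x ≠ 0 → 0 < s x x := by
      intro x hx hx0
      rcases (hs_psd x).lt_or_eq with h | h
      · exact h
      · exfalso
        have hk : x ∈ LinearMap.ker s := LinearMap.mem_ker.mpr
          (mem_ker_of_psd s hs_symm hs_psd h.symm)
        have := hU.disjoint.le_bot ⟨hk, hx⟩
        exact hx0 (by simpa using this)
    have h1 : finrank ℝ U ≤ c := hc ▸ le_posDim s U hUpos
    have h2 : finrank ℝ (LinearMap.ker s) + finrank ℝ U = n :=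
      Submodule.finrank_add_eq_of_isCompl hU
    obtain ⟨U', hU'rank, hU'pos⟩ := exists_posDim s
    have hdisj : Disjoint U' (LinearMap.ker s) := by
      rw [disjoint_iff_inf_le]
      intro x ⟨hx1, hx2⟩
      have hsx : s x x = 0 := by
        have : s x = 0 := LinearMap.mem_ker.mp hx2
        rw [this]; simp
      by_contra hx0
      have hx0' : x ≠ 0 := by simpa using hx0
      exact absurd hsx (ne_of_gt (hU'pos x hx1 hx0'))
    have h3 : finrank ℝ U' + finrank ℝ (LinearMap.ker s) ≤ n :=
      Submodule.finrank_add_finrank_le_of_disjoint hdisj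
    rw [hU'rank, hc, hb] at h3
    rw [hb] at h2
    omega
  -- upper bound: posDim q + negDim q + finrank ker q ≤ n
  obtain ⟨U, hUrank, hUpos⟩ := exists_posDim q
  obtain ⟨V, hVrank, hVneg⟩ := exists_negDim q
  set K := LinearMap.ker q with hK
  have hVK : Disjoint V K := by
    rw [disjoint_iff_inf_le]
    intro x ⟨hx1, hx2⟩
    have : q x x = 0 := by
      have : q x = 0 := LinearMap.mem_ker.mp hx2
      rw [this]; simp
    by_contra hx0
    have hx0' : x ≠ 0 := by simpa using hx0
    exact absurd this (ne_of_lt (hVneg x hx1 hx0'))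
  have hUVK : Disjoint U (V ⊔ K) := by
    rw [disjoint_iff_inf_le]
    intro x ⟨hx1, hx2⟩
    obtain ⟨v, hv, k, hk, hvk⟩ := Submodule.mem_sup.mp hx2
    have hkq : q k = 0 := LinearMap.mem_ker.mp hk
    have hxv : q x x = q v v := by
      rw [← hvk]
      have h1 : q (v + k) (v + k) = q v v + q v k + (q k v + q k k) := by
        simp [map_add]
        ring
      have h2 : q k v = 0 := by rw [hkq]; simp
      have h3 : q k k = 0 := by rw [hkq]; simp
      have h4 : q v k = 0 := by rw [hq_symm v k, hkq]; simp
      rw [h1, h2, h3, h4]; ring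
    by_contra hx0
    have hx0' : x ≠ 0 := by simpa using hx0
    have hpos : 0 < q x x := hUpos x hx1 hx0'
    rcases eq_or_ne v 0 with rfl | hv0
    · simp at hxv; linarith
    · exact absurd hxv (by have := hVneg v hv hv0; linarith)
  have hVKrank : finrank ℝ ↥(V ⊔ K) = finrank ℝ V + finrank ℝ K := by
    have := Submodule.finrank_sup_add_finrank_inf_eq V K
    rw [hVK.eq_bot] at this
    simpa using this
  have hsum : finrank ℝ U + (finrank ℝ V + finrank ℝ K) ≤ n := by
    have := Submodule.finrank_add_finrank_le_of_disjoint hUVK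
    rwa [hVKrank] at this
  rw [hUrank, hVrank] at hsum
  -- conclude
  have hfin : negDim q = c ∧ finrank ℝ K = 0 ∧ posDim q = b := by omega
  simp only [signature, Prod.mk.injEq]
  exact ⟨hfin.1, hfin.2.1, hfin.2.2⟩
end

section
/- Let G ⊆ GL(n) be a Lie subgroup with Lie algebra g, and μ ∈ Λ²(n*) ⊗ n a point whose orbit G·μ is closed. Then there exists μ̄ ∈ G·μ such that ⟨Ric_{μ̄}, A⟩ = 0 for all A ∈ g, where Ric_{μ̄} is the Ricci endomorphism satisfying ⟨Ric_ν, A⟩ = (1/4)⟨π(A)ν, ν⟩ for all endomorphisms A. -/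
open scoped RealInnerProductSpace
open NormedSpace Metric Set

section Aux
variable {n : Type*} [NormedAddCommGroup n] [InnerProductSpace ℝ n] [FiniteDimensional ℝ n]

theorem aux_hasDerivAt (A : n →L[ℝ] n) (W : n →L[ℝ] n →L[ℝ] n) (x y z : n) :
    HasDerivAt
      (fun t : ℝ => ⟪exp (t • A) (W (exp (-(t • A)) x) (exp (-(t • A)) y)), z⟫)
      ⟪A (W x y) - W (A x) y - W x (A y), z⟫ 0 := by
  have h1 : HasDerivAt (fun t : ℝ => exp (t • A)) A 0 := by
    simpa using hasDerivAt_exp_smul_const (𝕂 := ℝ) A 0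
  have h2 : HasDerivAt (fun t : ℝ => exp (-(t • A))) (-A) 0 := by
    have := hasDerivAt_exp_smul_const (𝕂 := ℝ) (-A) 0
    simpa [smul_neg] using this
  have hx : HasDerivAt (fun t : ℝ => exp (-(t • A)) x) (-(A x)) 0 := by
    simpa using h2.clm_apply (hasDerivAt_const (0:ℝ) x)
  have hy : HasDerivAt (fun t : ℝ => exp (-(t • A)) y) (-(A y)) 0 := by
    simpa using h2.clm_apply (hasDerivAt_const (0:ℝ) y)
  have hWx : HasDerivAt (fun t : ℝ => W (exp (-(t • A)) x)) (W (-(A x))) 0 := by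
    simpa using (hasDerivAt_const (0:ℝ) W).clm_apply hx
  have hin : HasDerivAt (fun t : ℝ => W (exp (-(t • A)) x) (exp (-(t • A)) y))
      (W (-(A x)) y + W x (-(A y))) 0 := by
    simpa using hWx.clm_apply hy
  have hout : HasDerivAt
      (fun t : ℝ => exp (t • A) (W (exp (-(t • A)) x) (exp (-(t • A)) y)))
      (A (W x y) + (W (-(A x)) y + W x (-(A y)))) 0 := by
    simpa using h1.clm_apply hin
  have hvec : A (W x y) + (W (-(A x)) y + W x (-(A y)))
      = A (W x y) - W (A x) y - W x (A y) := by
    simp [map_neg, sub_eq_add_neg, add_assoc]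
  have h := HasDerivAt.inner (𝕜 := ℝ) hout (hasDerivAt_const (0:ℝ) z)
  rw [hvec] at h
  simpa using h

set_option linter.unusedSectionVars false in
theorem aux_expand {ι : Type*} [Fintype ι] (b : OrthonormalBasis ι ℝ n)
    (B : n →ₗ[ℝ] n →ₗ[ℝ] n) (x y : n) :
    ∑ q : ι × ι × ι, ((⟪B (b q.1) (b q.2.1), b q.2.2⟫ * ⟪x, b q.1⟫) * ⟪y, b q.2.1⟫) • b q.2.2
      = B x y := by
  have inner3 : ∀ i j : ι, ∑ k, ((⟪B (b i) (b j), b k⟫ * ⟪x, b i⟫) * ⟪y, b j⟫) • b k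
      = (⟪x, b i⟫ * ⟪y, b j⟫) • B (b i) (b j) := by
    intro i j
    calc ∑ k, ((⟪B (b i) (b j), b k⟫ * ⟪x, b i⟫) * ⟪y, b j⟫) • b k
        = (⟪x, b i⟫ * ⟪y, b j⟫) • ∑ k, ⟪b k, B (b i) (b j)⟫ • b k := by
          rw [Finset.smul_sum]
          refine Finset.sum_congr rfl fun k _ => ?_
          rw [smul_smul, real_inner_comm]
          ring_nf
      _ = (⟪x, b i⟫ * ⟪y, b j⟫) • B (b i) (b j) := by rw [b.sum_repr']
  have hsum : B x y = ∑ i, ∑ j, (⟪x, b i⟫ * ⟪y, b j⟫) • B (b i) (b j) := by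
    conv_lhs => rw [← b.sum_repr' x, ← b.sum_repr' y]
    rw [map_sum]
    simp only [map_sum, map_smul, LinearMap.sum_apply, LinearMap.smul_apply,
      Finset.smul_sum, smul_smul]
    rw [Finset.sum_comm]
    refine Finset.sum_congr rfl fun i _ => Finset.sum_congr rfl fun j _ => ?_
    rw [real_inner_comm (b i) x, real_inner_comm (b j) y, mul_comm]
  rw [Fintype.sum_prod_type, hsum]
  refine Finset.sum_congr rfl fun i _ => ?_
  rw [Fintype.sum_prod_type]
  exact Finset.sum_congr rfl fun j _ => inner3 i j

end Aux

theorem aux_min {Q : Type*} [Fintype Q] {S' : Set (Q → ℝ)}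
    (hS' : IsClosed S') (hne : S'.Nonempty) :
    ∃ p ∈ S', ∀ q ∈ S', ∑ i, (p i)^2 ≤ ∑ i, (q i)^2 := by
  obtain ⟨p₀, hp₀⟩ := hne
  set F : (Q → ℝ) → ℝ := fun p => ∑ i, (p i)^2 with hF
  have hFcont : Continuous F :=
    continuous_finset_sum _ fun i _ => (continuous_apply i).pow 2
  have hFnn : ∀ p, 0 ≤ F p := fun p => Finset.sum_nonneg fun i _ => sq_nonneg _
  have hc : ∀ᶠ p in Filter.cocompact (Q → ℝ) ⊓ Filter.principal S', F p₀ ≤ F p := by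
    refine (Filter.hasBasis_cocompact.inf_principal _).eventually_iff.2
      ⟨closedBall 0 (Real.sqrt (F p₀)), isCompact_closedBall _ _, ?_⟩
    rintro p ⟨hp1, -⟩
    have hC : (0:ℝ) ≤ Real.sqrt (F p₀) := Real.sqrt_nonneg _
    have h1 : ¬ ‖p‖ ≤ Real.sqrt (F p₀) := by
      simpa [mem_closedBall, dist_zero_right] using hp1
    have h2 : ∃ i, ¬ ‖p i‖ ≤ Real.sqrt (F p₀) := by
      by_contra hall
      push_neg at hall
      exact h1 ((pi_norm_le_iff_of_nonneg hC).2 hall)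
    obtain ⟨i, hi⟩ := h2
    push_neg at hi
    have h3 : F p₀ < (p i)^2 := by
      have := pow_lt_pow_left₀ hi hC (n := 2) two_ne_zero
      rwa [Real.sq_sqrt (hFnn p₀), Real.norm_eq_abs, sq_abs] at this
    have h4 : (p i)^2 ≤ F p :=
      Finset.single_le_sum (fun j _ => sq_nonneg (p j)) (Finset.mem_univ i)
    linarith
  obtain ⟨pm, hpm, hmin⟩ := hFcont.continuousOn.exists_isMinOn' hS' hp₀ hc
  exact ⟨pm, hpm, fun q hq => hmin hq⟩

/-- If `G ⊆ GL(n)` is a Lie subgroup with Lie algebra `g` (i.e. the one-parameter groups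
`exp(tA)`, `A ∈ g`, lie in `G`) and the orbit `G·μ` of an antisymmetric bilinear
`μ ∈ Λ²(n*) ⊗ n` is closed, then some `μ̄ ∈ G·μ` satisfies `⟨Ric_μ̄, A⟩ = 0` for all
`A ∈ g`, where `Ric_ν` is characterised by `⟨Ric_ν, A⟩ = (1/4)⟨π(A)ν, ν⟩` for every
endomorphism `A`. -/
theorem closed_orbit_ricci_orthogonal
    (n : Type*) [NormedAddCommGroup n] [InnerProductSpace ℝ n] [FiniteDimensional ℝ n]
    (ι : Type*) [Fintype ι] (b : OrthonormalBasis ι ℝ n)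
    (μ : n →ₗ[ℝ] n →ₗ[ℝ] n) (halt : ∀ x : n, μ x x = 0)
    (G : Subgroup ((n →L[ℝ] n)ˣ))
    (hclosed : IsClosed {ν : n → n → n | ∃ h ∈ G,
      ν = fun x y => (h : n →L[ℝ] n) (μ (((h⁻¹ : (n →L[ℝ] n)ˣ) : n →L[ℝ] n) x)
        (((h⁻¹ : (n →L[ℝ] n)ˣ) : n →L[ℝ] n) y))})
    (g : Set (n →L[ℝ] n))
    (hg : ∀ A ∈ g, ∀ t : ℝ, ∃ u ∈ G, (u : n →L[ℝ] n) = NormedSpace.exp (t • A))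
    (Ric : (n → n → n) → (n → n))
    (hRic : ∀ (ν : n → n → n) (A : n →L[ℝ] n),
      ∑ i, ∑ j, ⟪Ric ν (b i), b j⟫ * ⟪A (b i), b j⟫ =
        (1/4) * ∑ i, ∑ j, ∑ k,
          ⟪A (ν (b i) (b j)) - ν (A (b i)) (b j) - ν (b i) (A (b j)), b k⟫ *
            ⟪ν (b i) (b j), b k⟫) :
    ∃ μbar ∈ {ν : n → n → n | ∃ h ∈ G,
      ν = fun x y => (h : n →L[ℝ] n) (μ (((h⁻¹ : (n →L[ℝ] n)ˣ) : n →L[ℝ] n) x)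
        (((h⁻¹ : (n →L[ℝ] n)ˣ) : n →L[ℝ] n) y))},
      ∀ A ∈ g, ∑ i, ∑ j, ⟪Ric μbar (b i), b j⟫ * ⟪A (b i), b j⟫ = 0 := by
  classical
  set S : Set (n → n → n) := {ν : n → n → n | ∃ h ∈ G,
      ν = fun x y => (h : n →L[ℝ] n) (μ (((h⁻¹ : (n →L[ℝ] n)ˣ) : n →L[ℝ] n) x)
        (((h⁻¹ : (n →L[ℝ] n)ˣ) : n →L[ℝ] n) y))} with hSdef
  set c₀ : (n → n → n) → (ι × ι × ι → ℝ) :=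
    fun ν q => ⟪ν (b q.1) (b q.2.1), b q.2.2⟫ with hc₀def
  set r : (ι × ι × ι → ℝ) → (n → n → n) :=
    fun p x y => ∑ q : ι × ι × ι, ((p q * ⟪x, b q.1⟫) * ⟪y, b q.2.1⟫) • b q.2.2 with hrdef
  -- every element of the orbit is a bilinear map
  have hbil : ∀ ν ∈ S, ∃ B : n →ₗ[ℝ] n →ₗ[ℝ] n, ν = fun x y => B x y := by
    rintro ν ⟨h, hG, rfl⟩
    refine ⟨(μ.compl₁₂ ((h⁻¹ : (n →L[ℝ] n)ˣ) : n →L[ℝ] n).toLinearMap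
      ((h⁻¹ : (n →L[ℝ] n)ˣ) : n →L[ℝ] n).toLinearMap).compr₂
      ((h : n →L[ℝ] n)).toLinearMap, ?_⟩
    funext x y
    simp [LinearMap.compr₂_apply, LinearMap.compl₁₂_apply]
  have hrc : ∀ ν ∈ S, r (c₀ ν) = ν := by
    intro ν hν
    obtain ⟨B, rfl⟩ := hbil ν hν
    funext x y
    simp only [hrdef, hc₀def]
    exact aux_expand b B x y
  have hc₀cont : Continuous c₀ := by
    rw [hc₀def]
    exact continuous_pi fun q => Continuous.inner
      ((continuous_apply (b q.2.1)).comp (continuous_apply (b q.1))) continuous_const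
  have hrcont : Continuous r := by
    rw [hrdef]
    refine continuous_pi fun x => continuous_pi fun y => ?_
    exact continuous_finset_sum _ fun q _ =>
      (((continuous_apply q).mul continuous_const).mul continuous_const).smul continuous_const
  set S' : Set (ι × ι × ι → ℝ) := c₀ '' S with hS'def
  have hS'closed : IsClosed S' := by
    have hset : S' = {p | r p ∈ S} ∩ {p | c₀ (r p) = p} := by
      ext p
      constructor
      · rintro ⟨ν, hν, rfl⟩
        have hh := hrc ν hν
        exact ⟨by simp only [Set.mem_setOf_eq, hh]; exact hν,
          by simp only [Set.mem_setOf_eq, hh]⟩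
      · rintro ⟨h1, h2⟩
        exact ⟨r p, h1, h2⟩
    rw [hset]
    exact (hclosed.preimage hrcont).inter (isClosed_eq (hc₀cont.comp hrcont) continuous_id)
  have hν₀S : (fun x y => μ x y) ∈ S := by
    refine ⟨1, one_mem G, ?_⟩
    funext x y
    simp
  obtain ⟨pm, hpmS', hminS⟩ := aux_min hS'closed ⟨c₀ (fun x y => μ x y), _, hν₀S, rfl⟩
  obtain ⟨μbar, hμbarS, hcm⟩ := hpmS'
  refine ⟨μbar, hμbarS, ?_⟩
  intro A hA
  obtain ⟨h, hG, hμbar⟩ := hμbarS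
  -- the bilinear map μbar as a continuous bilinear map W
  set B : n →ₗ[ℝ] n →ₗ[ℝ] n := (μ.compl₁₂ ((h⁻¹ : (n →L[ℝ] n)ˣ) : n →L[ℝ] n).toLinearMap
      ((h⁻¹ : (n →L[ℝ] n)ˣ) : n →L[ℝ] n).toLinearMap).compr₂
      ((h : n →L[ℝ] n)).toLinearMap with hBdef
  set W : n →L[ℝ] n →L[ℝ] n :=
    LinearMap.toContinuousLinearMap (LinearMap.toContinuousLinearMap.toLinearMap ∘ₗ B) with hWdef
  have hW : ∀ x y : n, W x y = μbar x y := by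
    intro x y
    rw [hμbar]
    simp [hWdef, hBdef]
  -- the one-parameter curve through μbar stays in the orbit
  have horbit : ∀ t : ℝ, (fun x y => NormedSpace.exp (t • A)
      (W (NormedSpace.exp (-(t • A)) x) (NormedSpace.exp (-(t • A)) y))) ∈ S := by
    intro t
    obtain ⟨u, huG, hu⟩ := hg A hA t
    have hinv : ((u⁻¹ : (n →L[ℝ] n)ˣ) : n →L[ℝ] n) = NormedSpace.exp (-(t • A)) := by
      have hcomm : Commute (t • A) (-(t • A)) := (Commute.refl _).neg_right
      have h1 : NormedSpace.exp (t • A) * NormedSpace.exp (-(t • A)) = 1 := by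
        rw [← NormedSpace.exp_add_of_commute_of_mem_ball (𝕂 := ℝ) hcomm
          ((NormedSpace.expSeries_radius_eq_top ℝ (n →L[ℝ] n)).symm ▸ edist_lt_top _ _)
          ((NormedSpace.expSeries_radius_eq_top ℝ (n →L[ℝ] n)).symm ▸ edist_lt_top _ _)]
        simp
      calc ((u⁻¹ : (n →L[ℝ] n)ˣ) : n →L[ℝ] n)
          = ↑u⁻¹ * (↑u * NormedSpace.exp (-(t • A))) := by rw [hu, h1, mul_one]
        _ = (↑u⁻¹ * ↑u) * NormedSpace.exp (-(t • A)) := by rw [mul_assoc]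
        _ = NormedSpace.exp (-(t • A)) := by rw [Units.inv_mul, one_mul]
    refine ⟨u * h, mul_mem huG hG, ?_⟩
    funext x y
    rw [hW, hμbar]
    simp [Units.val_mul, mul_inv_rev, hu, hinv, ContinuousLinearMap.mul_apply]
  -- the squared norm along the curve, minimised at t = 0
  have hmint : ∀ t : ℝ,
      (∑ q : ι × ι × ι, (⟪NormedSpace.exp ((0:ℝ) • A)
        (W (NormedSpace.exp (-((0:ℝ) • A)) (b q.1))
           (NormedSpace.exp (-((0:ℝ) • A)) (b q.2.1))), b q.2.2⟫)^2)
      ≤ ∑ q : ι × ι × ι, (⟪NormedSpace.exp (t • A)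
        (W (NormedSpace.exp (-(t • A)) (b q.1))
           (NormedSpace.exp (-(t • A)) (b q.2.1))), b q.2.2⟫)^2 := by
    intro t
    have hmem : c₀ (fun x y => NormedSpace.exp (t • A)
        (W (NormedSpace.exp (-(t • A)) x) (NormedSpace.exp (-(t • A)) y))) ∈ S' :=
      ⟨_, horbit t, rfl⟩
    have h1 := hminS _ hmem
    have h2 : ∀ s : ℝ, c₀ (fun x y => NormedSpace.exp (s • A)
        (W (NormedSpace.exp (-(s • A)) x) (NormedSpace.exp (-(s • A)) y)))
        = fun q : ι × ι × ι => ⟪NormedSpace.exp (s • A)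
        (W (NormedSpace.exp (-(s • A)) (b q.1))
           (NormedSpace.exp (-(s • A)) (b q.2.1))), b q.2.2⟫ := fun s => rfl
    have h0 : pm = c₀ (fun x y => NormedSpace.exp ((0:ℝ) • A)
        (W (NormedSpace.exp (-((0:ℝ) • A)) x) (NormedSpace.exp (-((0:ℝ) • A)) y))) := by
      rw [← hcm]
      have : (fun x y => NormedSpace.exp ((0:ℝ) • A)
          (W (NormedSpace.exp (-((0:ℝ) • A)) x) (NormedSpace.exp (-((0:ℝ) • A)) y)))
          = μbar := by
        funext x y
        simp [hW]
      rw [this]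
    rw [h0] at h1
    simpa [h2] using h1
  have hloc : IsLocalMin (fun t : ℝ => ∑ q : ι × ι × ι, (⟪NormedSpace.exp (t • A)
        (W (NormedSpace.exp (-(t • A)) (b q.1))
           (NormedSpace.exp (-(t • A)) (b q.2.1))), b q.2.2⟫)^2) 0 :=
    Filter.Eventually.of_forall fun t => hmint t
  have hder : HasDerivAt (fun t : ℝ => ∑ q : ι × ι × ι, (⟪NormedSpace.exp (t • A)
        (W (NormedSpace.exp (-(t • A)) (b q.1))
           (NormedSpace.exp (-(t • A)) (b q.2.1))), b q.2.2⟫)^2)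
      (∑ q : ι × ι × ι, 2 * ⟪W (b q.1) (b q.2.1), b q.2.2⟫ *
        ⟪A (W (b q.1) (b q.2.1)) - W (A (b q.1)) (b q.2.1) - W (b q.1) (A (b q.2.1)),
          b q.2.2⟫) 0 := by
    refine HasDerivAt.fun_sum fun q _ => ?_
    have := (aux_hasDerivAt A W (b q.1) (b q.2.1) (b q.2.2)).fun_pow 2
    norm_num at this
    convert this using 2
  have hD0 := hloc.hasDerivAt_eq_zero hder
  rw [hRic μbar A]
  have hT : (∑ i, ∑ j, ∑ k,
      ⟪A (μbar (b i) (b j)) - μbar (A (b i)) (b j) - μbar (b i) (A (b j)), b k⟫ *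
        ⟪μbar (b i) (b j), b k⟫) = 0 := by
    have key : (∑ q : ι × ι × ι, 2 * ⟪W (b q.1) (b q.2.1), b q.2.2⟫ *
        ⟪A (W (b q.1) (b q.2.1)) - W (A (b q.1)) (b q.2.1) - W (b q.1) (A (b q.2.1)),
          b q.2.2⟫)
        = 2 * ∑ i, ∑ j, ∑ k,
          ⟪A (μbar (b i) (b j)) - μbar (A (b i)) (b j) - μbar (b i) (A (b j)), b k⟫ *
            ⟪μbar (b i) (b j), b k⟫ := by
      simp only [Fintype.sum_prod_type, Finset.mul_sum, hW]
      refine Finset.sum_congr rfl fun i _ => Finset.sum_congr rfl fun j _ =>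
        Finset.sum_congr rfl fun k _ => ?_
      ring
    rw [key] at hD0
    linarith
  rw [hT, mul_zero]
end

section
/- Let L be a self-adjoint positive semi-definite linear operator on a finite-dimensional real inner product space P, and let s ⊆ P be a subspace with orthogonal projection pr_s. Then pr_s ∘ L : P → s is surjective if and only if s ∩ ker L = 0. -/
/-- For a self-adjoint positive semi-definite operator `L` on a finite-dimensional real
inner product space `P` and a subspace `s ⊆ P`, the composition `pr_s ∘ L` is surjective
onto `s` if and only if `s ∩ ker L = 0`. -/
theorem proj_comp_surjective_iff
    (P : Type*) [NormedAddCommGroup P] [InnerProductSpace ℝ P] [FiniteDimensional ℝ P]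
    (L : P →ₗ[ℝ] P)
    (hsa : ∀ x y : P, inner ℝ (L x) y = (inner ℝ x (L y) : ℝ))
    (hpsd : ∀ x : P, (0 : ℝ) ≤ inner ℝ (L x) x)
    (s : Submodule ℝ P) :
    Function.Surjective (fun x : P => s.orthogonalProjection (L x)) ↔
      s ⊓ LinearMap.ker L = ⊥ := by
  -- Key lemma: ⟨Lv,v⟩ = 0 → Lv = 0 (Cauchy–Schwarz for the PSD form)
  have key : ∀ v : P, (inner ℝ (L v) v : ℝ) = 0 → L v = 0 := by
    intro v hv
    have hB : ∀ x : P, (inner ℝ (L v) x : ℝ) = 0 := by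
      intro x
      set a : ℝ := inner ℝ (L x) x with ha
      set b : ℝ := inner ℝ (L v) x with hb
      have ha0 : 0 ≤ a := hpsd x
      set t : ℝ := -b / (a + 1) with ht
      have hpos : (0:ℝ) < a + 1 := by linarith
      have h1 : (0:ℝ) ≤ inner ℝ (L (v + t • x)) (v + t • x) := hpsd _
      have hsym : (inner ℝ (L x) v : ℝ) = b := by
        rw [hsa x v, real_inner_comm]
      have hexp : (inner ℝ (L (v + t • x)) (v + t • x) : ℝ) = 2 * t * b + t^2 * a := by
        simp only [map_add, map_smul, inner_add_left, inner_add_right,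
          real_inner_smul_left, real_inner_smul_right, hv, hsym, ← hb, ← ha]
        ring
      rw [hexp] at h1
      have htb : t * (a + 1) = -b := by
        rw [ht]; field_simp
      have h3 : (0:ℝ) ≤ (2*t*b + t^2*a) * (a+1)^2 := mul_nonneg h1 (by positivity)
      have h4 : (2*t*b + t^2*a) * (a+1)^2 = -(b^2)*(a+2) := by
        calc (2*t*b + t^2*a) * (a+1)^2
            = 2*(t*(a+1))*b*(a+1) + (t*(a+1))^2 * a := by ring
          _ = 2*(-b)*b*(a+1) + (-b)^2*a := by rw [htb]
          _ = -(b^2)*(a+2) := by ring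
      have h5 : b^2 ≤ 0 := by nlinarith [h3, h4, ha0]
      exact sq_eq_zero_iff.mp (le_antisymm h5 (sq_nonneg b))
    have := hB (L v)
    exact inner_self_eq_zero.mp this
  constructor
  · intro hsurj
    rw [Submodule.eq_bot_iff]
    rintro v ⟨hvs, hvk⟩
    have hLv : L v = 0 := hvk
    obtain ⟨x, hx⟩ := hsurj ⟨v, hvs⟩
    have hx' : s.orthogonalProjection (L x) = (⟨v, hvs⟩ : s) := hx
    have h0 : (inner ℝ (L x - ((s.orthogonalProjection (L x) : s) : P)) v : ℝ) = 0 :=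
      s.starProjection_inner_eq_zero (L x) v hvs
    rw [inner_sub_left] at h0
    have h1 : (inner ℝ ((s.orthogonalProjection (L x) : s) : P) v : ℝ) = inner ℝ (L x) v := by
      linarith
    have h2 : (inner ℝ (L x) v : ℝ) = 0 := by
      rw [hsa, hLv, inner_zero_right]
    rw [hx'] at h1
    rw [h2] at h1
    exact inner_self_eq_zero.mp h1
  · intro hbot
    set T : s →ₗ[ℝ] s := (s.orthogonalProjection).toLinearMap ∘ₗ L ∘ₗ s.subtype with hT
    have hinj : Function.Injective T := by
      rw [← LinearMap.ker_eq_bot, Submodule.eq_bot_iff]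
      intro v hv
      have hv' : s.orthogonalProjection (L v.val) = 0 := hv
      have hmem : L v.val ∈ sᗮ := by
        rwa [Submodule.orthogonalProjectionOnto_eq_zero_iff] at hv'
      have hzero : (inner ℝ (L v.val) v.val : ℝ) = 0 := by
        rw [real_inner_comm]; exact hmem v.val v.property
      have hLv : L v.val = 0 := key _ hzero
      have : v.val ∈ s ⊓ LinearMap.ker L := ⟨v.property, hLv⟩
      rw [hbot] at this
      exact Subtype.ext this
    have hsurjT : Function.Surjective T :=
      (LinearMap.injective_iff_surjective).mp hinj
    intro w
    obtain ⟨v, hv⟩ := hsurjT w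
    exact ⟨v.val, hv⟩
end
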